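/- Let n ≥ 1, let Z be a subset of Euclidean n-space (EuclideanSpace ℝ (Fin n)) whose Hausdorff dimension is strictly less than n − 1, and let p be a point with p ∉ Z. Then the set of unit vectors v (i.e. v with ‖v‖ = 1) such that p + t·v ∉ Z for every t > 0 is dense in the unit sphere. -/

import Mathlib

open ENNReal

open Set Module RealInnerProductSpace in
private theorem aux_dense_directions {E : Type*} [NormedAddCommGroup E]
    [InnerProductSpace ℝ E] [FiniteDimensional ℝ E] (n : ℕ) (hn : 1 ≤ n)
    (hfinE : finrank ℝ E = n) (Z : Set E) (hZd : dimH Z < (n : ℝ≥0∞) - 1)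
    (p : E) (v : E) (hv1 : ‖v‖ = 1) :
    v ∈ closure {v : E | ‖v‖ = 1 ∧ ∀ t : ℝ, 0 < t → p + t • v ∉ Z} := by
  have hv0 : v ≠ 0 := by intro h; rw [h, norm_zero] at hv1; norm_num at hv1
  set K : Submodule ℝ E := (ℝ ∙ v)ᗮ with hK
  have hfact : Fact (finrank ℝ E = (n - 1) + 1) := ⟨by omega⟩
  have hfinK : finrank ℝ K = n - 1 := Submodule.finrank_orthogonal_span_singleton hv0
  set U : Set E := {x | 0 < ⟪x - p, v⟫} with hU
  have hUconv : Convex ℝ U := by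
    intro x hx y hy a b ha hb hab
    simp only [hU, mem_setOf_eq] at hx hy ⊢
    have : ⟪a • x + b • y - p, v⟫ = a * ⟪x - p, v⟫ + b * ⟪y - p, v⟫ := by
      rw [inner_sub_left, inner_sub_left, inner_sub_left, inner_add_left,
        real_inner_smul_left, real_inner_smul_left]
      linear_combination (inner ℝ p v : ℝ) * hab
    rw [this]
    rcases ha.lt_or_eq with ha' | ha'
    · exact add_pos_of_pos_of_nonneg (mul_pos ha' hx) (mul_nonneg hb hy.le)
    · rw [← ha', zero_mul, zero_add]
      have hb1 : b = 1 := by linarith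
      rw [hb1, one_mul]; exact hy
  set ψ : E → K := fun x => K.orthogonalProjectionOnto ((⟪x - p, v⟫)⁻¹ • (x - p)) with hψ
  have hψc : ContDiffOn ℝ 1 ψ U := by
    apply (K.orthogonalProjectionOnto).contDiff.comp_contDiffOn
    apply ContDiffOn.smul
    · apply ContDiffOn.inv
      · exact ((contDiff_id.sub contDiff_const).inner ℝ
          ((contDiff_const : ContDiff ℝ 1 fun _ : E => v))).contDiffOn
      · exact fun x hx => ne_of_gt hx
    · exact (contDiff_id.sub contDiff_const).contDiffOn
  have hdim : dimH (Z ∩ U) < finrank ℝ K := by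
    refine lt_of_le_of_lt (dimH_mono inter_subset_left) ?_
    rw [hfinK]
    calc dimH Z < (n : ℝ≥0∞) - 1 := hZd
    _ = ((n - 1 : ℕ) : ℝ≥0∞) := by rw [ENNReal.natCast_sub, Nat.cast_one]
  have hdense : Dense (ψ '' (Z ∩ U))ᶜ :=
    hψc.dense_compl_image_of_dimH_lt_finrank hUconv inter_subset_right hdim
  rw [Metric.mem_closure_iff]
  intro ε hε
  obtain ⟨u, hu, hub⟩ := hdense.exists_mem_open Metric.isOpen_ball
    (⟨0, by simpa using half_pos (half_pos hε)⟩ :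
      (Metric.ball (0 : K) (ε / 2 / 2)).Nonempty)
  rw [Metric.mem_ball, dist_zero_right] at hub
  have huv : ⟪(u : E), v⟫ = 0 := by
    have := Submodule.mem_orthogonal_singleton_iff_inner_right.mp u.2
    rwa [real_inner_comm] at this
  have hnorm1 : (1 : ℝ) ≤ ‖v + (u : E)‖ := by
    have h : ‖v + (u : E)‖ ^ 2 = 1 + ‖(u : E)‖ ^ 2 := by
      rw [norm_add_sq_real, real_inner_comm, huv, hv1]; ring
    nlinarith [norm_nonneg (v + (u : E)), norm_nonneg (u : E)]
  have hpos : (0 : ℝ) < ‖v + (u : E)‖ := lt_of_lt_of_le one_pos hnorm1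
  set w : E := ‖v + (u : E)‖⁻¹ • (v + (u : E)) with hw
  have hw1 : ‖w‖ = 1 := by
    rw [hw, norm_smul, norm_inv, norm_norm, inv_mul_cancel₀ hpos.ne']
  refine ⟨w, ⟨hw1, ?_⟩, ?_⟩
  · intro t ht hmem
    set s : ℝ := t * ‖v + (u : E)‖⁻¹ with hs
    have hs0 : 0 < s := mul_pos ht (inv_pos.mpr hpos)
    have hxe : p + t • w = p + s • (v + (u : E)) := by
      rw [hw, hs, smul_smul]
    rw [hxe] at hmem
    set x : E := p + s • (v + (u : E)) with hx
    have hc : ⟪x - p, v⟫ = s := by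
      rw [hx, add_sub_cancel_left, real_inner_smul_left, inner_add_left,
        real_inner_self_eq_norm_sq, hv1, huv]
      ring
    have hxU : x ∈ U := by rw [hU, mem_setOf_eq, hc]; exact hs0
    apply hu
    refine ⟨x, ⟨hmem, hxU⟩, ?_⟩
    have hi : ⟪s • (v + (u : E)), v⟫ = s := by
      rw [real_inner_smul_left, inner_add_left, real_inner_self_eq_norm_sq, hv1, huv]
      ring
    show K.orthogonalProjectionOnto ((⟪x - p, v⟫)⁻¹ • (x - p)) = u
    rw [hx, add_sub_cancel_left, hi, smul_smul, inv_mul_cancel₀ hs0.ne', one_smul]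
    rw [map_add, Submodule.orthogonalProjectionOnto_mem_subspace_eq_self ⟨(u : E), u.2⟩,
      Submodule.orthogonalProjectionOnto_apply_of_mem_orthogonal
        ((ℝ ∙ v).le_orthogonal_orthogonal (Submodule.mem_span_singleton_self v))]
    simp
  · have h1 : ‖w - (v + (u : E))‖ = ‖v + (u : E)‖ - 1 := by
      have e : w - (v + (u : E)) = (‖v + (u : E)‖⁻¹ - 1) • (v + (u : E)) := by
        rw [hw, sub_smul, one_smul]
      have hle : ‖v + (u : E)‖⁻¹ - 1 ≤ 0 := by
        rw [sub_nonpos]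
        exact inv_le_one_of_one_le₀ hnorm1
      rw [e, norm_smul, Real.norm_eq_abs, abs_of_nonpos hle]
      field_simp
      ring
    have h2 : ‖w - v‖ ≤ 2 * ‖(u : E)‖ := by
      have e1 : w - v = (w - (v + (u : E))) + (u : E) := by abel
      have e2 : ‖v + (u : E)‖ ≤ 1 + ‖(u : E)‖ := by
        have := norm_add_le v (u : E); rwa [hv1] at this
      calc ‖w - v‖ = ‖(w - (v + (u : E))) + (u : E)‖ := by rw [e1]
      _ ≤ ‖w - (v + (u : E))‖ + ‖(u : E)‖ := norm_add_le _ _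
      _ = (‖v + (u : E)‖ - 1) + ‖(u : E)‖ := by rw [h1]
      _ ≤ 2 * ‖(u : E)‖ := by linarith
    rw [dist_eq_norm]
    calc ‖v - w‖ = ‖w - v‖ := norm_sub_rev _ _
    _ ≤ 2 * ‖(u : E)‖ := h2
    _ < ε := by
      have hub2 : ‖(u : E)‖ < ε / 2 / 2 := by simpa using hub
      linarith

/-- If Z ⊆ ℝⁿ has Hausdorff dimension < n − 1 and p ∉ Z, then the set of unit
directions v such that the open ray p + tv (t > 0) misses Z is dense in the
unit sphere. -/
theorem dense_directions_missing_small_set (n : ℕ) (hn : 1 ≤ n)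
    (Z : Set (EuclideanSpace ℝ (Fin n))) (hZd : dimH Z < (n : ℝ≥0∞) - 1)
    (p : EuclideanSpace ℝ (Fin n)) (hp : p ∉ Z) :
    Metric.sphere (0 : EuclideanSpace ℝ (Fin n)) 1 ⊆
      closure {v : EuclideanSpace ℝ (Fin n) |
        ‖v‖ = 1 ∧ ∀ t : ℝ, 0 < t → p + t • v ∉ Z} := by
  intro v hv
  exact aux_dense_directions n hn finrank_euclideanSpace_fin Z hZd p v (by simpa using hv)
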